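/- Let T and S be trees and μ a model of T in S. If v is a vertex of T of infinite degree, then either μ(v) contains a vertex of S of infinite degree, or μ(v) contains a ray of S that is not eventually bare. -/

import Mathlib

open SimpleGraph

/-- A ray in a graph: a one-way infinite path. -/
def IsRay {V : Type*} (G : SimpleGraph V) (f : ℕ → V) : Prop :=
  Function.Injective f ∧ ∀ n, G.Adj (f n) (f (n + 1))

/-- The degree of a vertex, as an extended natural number. -/
noncomputable def eDeg {V : Type*} (G : SimpleGraph V) (v : V) : ℕ∞ :=
  (G.neighborSet v).encard

/-- A ray is eventually bare if from some index on all its vertices have degree 2. -/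
def EventuallyBare {V : Type*} (G : SimpleGraph V) (f : ℕ → V) : Prop :=
  ∃ M : ℕ, ∀ n ≥ M, eDeg G (f n) = 2

/-- A tree is small if every ray in it is eventually bare. -/
def IsSmall {V : Type*} (G : SimpleGraph V) : Prop :=
  ∀ f : ℕ → V, IsRay G f → EventuallyBare G f

/-- A minor model of `T` in `S`: pairwise disjoint nonempty connected branch sets,
every edge of `T` witnessed by an edge of `S` between the corresponding branch sets. -/
structure IsModel {V W : Type*} (T : SimpleGraph V) (S : SimpleGraph W)
    (μ : V → Set W) : Prop where
  nonempty : ∀ v, (μ v).Nonempty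
  connected : ∀ v, (S.induce (μ v)).Connected
  disjoint : ∀ v w, v ≠ w → Disjoint (μ v) (μ w)
  edge : ∀ v w, T.Adj v w → ∃ a ∈ μ v, ∃ b ∈ μ w, S.Adj a b

/-- `T` is a minor of `S`. -/
def IsMinorOf {V W : Type*} (T : SimpleGraph V) (S : SimpleGraph W) : Prop :=
  ∃ μ : V → Set W, IsModel T S μ

/-- Tree order relative to a root: `v` lies on the (unique) path from `r` to `w`. -/
def treeLE {V : Type*} (G : SimpleGraph V) (r v w : V) : Prop :=
  v = w ∨ ∃ p : G.Walk r w, p.IsPath ∧ v ∈ p.support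

/-- Closure of a vertex set: the set together with all vertices on paths joining its members. -/
def treeClosure {V : Type*} (G : SimpleGraph V) (A : Set V) : Set V :=
  A ∪ {x | ∃ a ∈ A, ∃ b ∈ A, ∃ p : G.Walk a b, p.IsPath ∧ x ∈ p.support}


lemma infinite_fiber {α β : Type*} {s : Set α} {t : Set β} (g : α → β)
    (hs : s.Infinite) (hmap : ∀ a ∈ s, g a ∈ t) (ht : t.Finite) :
    ∃ c ∈ t, {a ∈ s | g a = c}.Infinite := by
  by_contra h
  push_neg at h
  have hsub : s ⊆ ⋃ c ∈ t, {a ∈ s | g a = c} := fun a ha =>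
    Set.mem_biUnion (hmap a ha) ⟨ha, rfl⟩
  exact hs ((ht.biUnion (fun c hc => h c hc)).subset hsub)

lemma pair_mem_eq {α : Type*} {s : Set α} (h2 : s.encard = 2) {u v : α}
    (hu : u ∈ s) (hv : v ∈ s) (huv : u ≠ v) : ∀ z ∈ s, z = u ∨ z = v := by
  obtain ⟨a, b, hab, rfl⟩ := Set.encard_eq_two.mp h2
  intro z hz
  simp only [Set.mem_insert_iff, Set.mem_singleton_iff] at hu hv hz
  rcases hu with rfl | rfl <;> rcases hv with rfl | rfl <;> tauto

lemma three_le_encard {α : Type*} {s : Set α} {a b c : α}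
    (ha : a ∈ s) (hb : b ∈ s) (hc : c ∈ s)
    (hab : a ≠ b) (hac : a ≠ c) (hbc : b ≠ c) : (3 : ℕ∞) ≤ s.encard := by
  have h1 : ({a, b, c} : Set α).encard = 3 := by
    rw [Set.encard_insert_of_notMem (by simp [hab, hac]), Set.encard_pair hbc]; rfl
  calc (3 : ℕ∞) = ({a, b, c} : Set α).encard := h1.symm
    _ ≤ s.encard := Set.encard_le_encard (by
      intro z hz
      simp only [Set.mem_insert_iff, Set.mem_singleton_iff] at hz
      rcases hz with rfl | rfl | rfl <;> assumption)

lemma tree_ray {W : Type*} (S : SimpleGraph W) (hS : S.IsTree) (A : Set W)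
    (hA : (S.induce A).Connected) (B : Set W) (hBA : B ⊆ A) (hB : B.Infinite)
    (hout : ∀ b ∈ B, ∃ c, S.Adj b c ∧ c ∉ A)
    (hfin : ∀ w ∈ A, eDeg S w ≠ ⊤) :
    ∃ f : ℕ → W, IsRay S f ∧ ¬ EventuallyBare S f ∧ ∀ n, f n ∈ A := by
  classical
  -- unique paths
  obtain ⟨P, hP, hU⟩ : ∃ P : ∀ x y : W, S.Walk x y, (∀ x y, (P x y).IsPath) ∧
      (∀ x y (q : S.Walk x y), q.IsPath → q = P x y) :=
    ⟨fun x y => (hS.existsUnique_path x y).choose,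
     fun x y => (hS.existsUnique_path x y).choose_spec.1,
     fun x y q hq => (hS.existsUnique_path x y).choose_spec.2 q hq⟩
  -- paths between vertices of A stay in A
  have suppA : ∀ x y, x ∈ A → y ∈ A → ∀ z ∈ (P x y).support, z ∈ A := by
    intro x y hx hy z hz
    obtain ⟨w0⟩ := hA.preconnected ⟨x, hx⟩ ⟨y, hy⟩
    have hbp : (w0.map (SimpleGraph.Embedding.induce A).toHom).bypass = P x y :=
      hU x y _ (SimpleGraph.Walk.bypass_isPath _)
    have hz' : z ∈ (w0.map (SimpleGraph.Embedding.induce A).toHom).support :=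
      SimpleGraph.Walk.support_bypass_subset _ (hbp ▸ hz)
    rw [SimpleGraph.Walk.support_map] at hz'
    obtain ⟨⟨z', hz'A⟩, _, rfl⟩ := List.mem_map.mp hz'
    exact hz'A
  -- first step function
  set fst : W → W → W := fun x b => (P x b).getVert 1 with hfstdef
  have master : ∀ x b, x ≠ b → S.Adj x (fst x b) ∧
      (P (fst x b) b).length + 1 = (P x b).length ∧
      x ∉ (P (fst x b) b).support ∧ fst x b ∈ (P x b).support := by
    intro x b hxb
    obtain ⟨c, h, q, hq⟩ := SimpleGraph.Walk.exists_eq_cons_of_ne hxb (P x b)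
    have hfs : fst x b = c := by
      rw [hfstdef]; simp [hq, SimpleGraph.Walk.getVert_cons _ _ one_ne_zero]
    have hpath := hP x b
    rw [hq, SimpleGraph.Walk.cons_isPath_iff] at hpath
    have hqP : q = P c b := hU c b q hpath.1
    refine ⟨hfs ▸ h, ?_, ?_, ?_⟩
    · rw [hfs, ← hqP, hq, SimpleGraph.Walk.length_cons]
    · rw [hfs, ← hqP]; exact hpath.2
    · rw [hq, SimpleGraph.Walk.support_cons, hfs]
      exact List.mem_cons_of_mem _ q.start_mem_support
  -- invariant
  set Inv : W → W → Set W → Prop := fun p x C =>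
    x ∈ A ∧ C ⊆ B ∧ C.Infinite ∧ ∀ b ∈ C, b ≠ x ∧ fst x b ≠ p with hInvdef
  -- step
  have step : ∀ p x C, Inv p x C → ∃ x' C', S.Adj x x' ∧ x' ≠ p ∧ Inv x x' C' ∧
      (∀ b ∈ C, b ≠ x' → fst x b = x' → b ∈ C') ∧ C' ⊆ C := by
    intro p x C hinv
    obtain ⟨hxA, hCB, hCi, hCprop⟩ := hinv
    have hnb : (S.neighborSet x).Finite := Set.encard_ne_top_iff.mp (hfin x hxA)
    obtain ⟨c, hcnb, hFi⟩ := infinite_fiber (fun b => fst x b) hCi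
      (fun b hb => (master x b (hCprop b hb).1.symm).1) hnb
    set F : Set W := {b ∈ C | fst x b = c} with hFdef
    obtain ⟨b0, hb0⟩ := hFi.nonempty
    have hcp : c ≠ p := hb0.2 ▸ (hCprop b0 hb0.1).2
    have hcA : c ∈ A := by
      have hm := (master x b0 (hCprop b0 hb0.1).1.symm).2.2.2
      rw [hb0.2] at hm
      exact suppA x b0 hxA (hBA (hCB hb0.1)) c hm
    refine ⟨c, F \ {c}, hcnb, hcp, ⟨hcA, fun b hb => hCB hb.1.1,
      hFi.diff (Set.finite_singleton c), ?_⟩, fun b hb hbc hfsb => ⟨⟨hb, hfsb⟩, hbc⟩,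
      fun b hb => hb.1.1⟩
    intro b hb
    refine ⟨hb.2, ?_⟩
    have hbx : x ≠ b := (hCprop b hb.1.1).1.symm
    have hm := master x b hbx
    rw [hb.1.2] at hm
    have hcb : c ≠ b := fun h => hb.2 h.symm
    have hm2 := (master c b hcb).2.2.2
    intro hcon
    exact hm.2.2.1 (hcon ▸ hm2)
  choose nx nC hadj hne hinv hmem _hsub using step
  -- initial state
  obtain ⟨x0, hx0B⟩ := hB.nonempty
  have inv0 : Inv x0 x0 (B \ {x0}) := by
    refine ⟨hBA hx0B, Set.diff_subset, hB.diff (Set.finite_singleton x0), ?_⟩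
    intro b hb
    refine ⟨hb.2, ?_⟩
    have := (master x0 b (fun h => hb.2 h.symm)).1
    exact this.ne'
  -- the sequence of states
  let St := {s : W × W × Set W // Inv s.1 s.2.1 s.2.2}
  let next : St → St := fun s =>
    ⟨(s.1.2.1, nx s.1.1 s.1.2.1 s.1.2.2 s.2, nC s.1.1 s.1.2.1 s.1.2.2 s.2),
      hinv s.1.1 s.1.2.1 s.1.2.2 s.2⟩
  let σ : ℕ → St := fun n => Nat.rec ⟨(x0, x0, B \ {x0}), inv0⟩ (fun _ s => next s) n
  let f : ℕ → W := fun n => (σ n).1.2.1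
  let pp : ℕ → W := fun n => (σ n).1.1
  let C : ℕ → Set W := fun n => (σ n).1.2.2
  have hInvn : ∀ n, Inv (pp n) (f n) (C n) := fun n => (σ n).2
  have hpn : ∀ n, pp (n + 1) = f n := fun n => rfl
  have hadjf : ∀ n, S.Adj (f n) (f (n + 1)) := fun n =>
    hadj (pp n) (f n) (C n) (σ n).2
  have hnef : ∀ n, f (n + 1) ≠ pp n := fun n => hne (pp n) (f n) (C n) (σ n).2
  have hmemf : ∀ n b, b ∈ C n → b ≠ f (n + 1) → fst (f n) b = f (n + 1) → b ∈ C (n + 1) :=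
    fun n => hmem (pp n) (f n) (C n) (σ n).2
  have fA : ∀ n, f n ∈ A := fun n => (hInvn n).1
  -- the walks along f
  let Wk : ∀ n, S.Walk (f 0) (f n) := fun n =>
    Nat.rec SimpleGraph.Walk.nil (fun m w => w.concat (hadjf m)) n
  have hWlen : ∀ n, (Wk n).length = n := by
    intro n; induction n with
    | zero => rfl
    | succ n ih => show ((Wk n).concat (hadjf n)).length = n + 1
                   rw [SimpleGraph.Walk.length_concat, ih]
  have hWsupp : ∀ n, (Wk n).support = (List.range (n + 1)).map f := by
    intro n; induction n with
    | zero => rfl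
    | succ n ih =>
        show ((Wk n).concat (hadjf n)).support = _
        rw [SimpleGraph.Walk.support_concat, ih]
        simp [List.range_succ]
  have hWpath : ∀ n, (Wk n).IsPath := by
    intro n
    induction n using Nat.strong_induction_on with
    | _ n IH =>
      match n with
      | 0 => exact SimpleGraph.Walk.IsPath.nil
      | (n + 1) =>
        have ihn := IH n (Nat.lt_succ_self n)
        show ((Wk n).concat (hadjf n)).IsPath
        rw [← SimpleGraph.Walk.isPath_reverse_iff, SimpleGraph.Walk.reverse_concat,
          SimpleGraph.Walk.cons_isPath_iff]
        refine ⟨(SimpleGraph.Walk.isPath_reverse_iff _).mpr ihn, ?_⟩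
        rw [SimpleGraph.Walk.support_reverse, List.mem_reverse]
        intro hmem'
        rw [hWsupp n] at hmem'
        obtain ⟨k, hk, hfk⟩ := List.mem_map.mp hmem'
        rw [List.mem_range] at hk
        -- f (n+1) = f k with k ≤ n
        rcases Nat.lt_or_ge k n with hkn | hkn
        · -- k < n : the unique-path length argument
          have hinjn := List.inj_on_of_nodup_map (hWsupp n ▸ ihn.support_nodup)
          have hadj' : S.Adj (f k) (f n) := (hfk ▸ hadjf n).symm
          have hQpath : ((Wk k).concat hadj').IsPath := by
            rw [← SimpleGraph.Walk.isPath_reverse_iff, SimpleGraph.Walk.reverse_concat,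
              SimpleGraph.Walk.cons_isPath_iff]
            refine ⟨(SimpleGraph.Walk.isPath_reverse_iff _).mpr
              (IH k (Nat.lt_succ_of_lt hkn)), ?_⟩
            rw [SimpleGraph.Walk.support_reverse, List.mem_reverse, hWsupp k]
            intro hmem2
            obtain ⟨j, hj, hfj⟩ := List.mem_map.mp hmem2
            rw [List.mem_range] at hj
            have hjn : j = n := hinjn (x := j) (List.mem_range.mpr (by omega))
              (y := n) (List.mem_range.mpr (by omega)) hfj
            omega
          have hq1 := hU (f 0) (f n) _ hQpath
          have hq2 := hU (f 0) (f n) _ ihn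
          have hlen : ((Wk k).concat hadj').length = (Wk n).length := by
            rw [hq1, ← hq2]
          rw [SimpleGraph.Walk.length_concat, hWlen, hWlen] at hlen
          subst hlen
          exact hnef (k + 1) (by rw [hpn k]; exact hfk.symm)
        · -- k = n : contradicts adjacency irrefl
          have hkeq : k = n := by omega
          subst hkeq
          exact (hadjf k).ne hfk
  have hinj : Function.Injective f := by
    intro m n hmn
    by_contra hne'
    rcases Nat.lt_or_ge m n with h | h
    · have hinjn := List.inj_on_of_nodup_map (hWsupp n ▸ (hWpath n).support_nodup)
      exact hne' (hinjn (x := m) (List.mem_range.mpr (by omega))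
        (y := n) (List.mem_range.mpr (by omega)) hmn)
    · have h' : n < m := by omega
      have hinjn := List.inj_on_of_nodup_map (hWsupp m ▸ (hWpath m).support_nodup)
      exact hne' (hinjn (x := m) (List.mem_range.mpr (by omega))
        (y := n) (List.mem_range.mpr (by omega)) hmn)
  clear_value Wk f pp C σ next St
  refine ⟨f, ⟨hinj, hadjf⟩, ?_, fA⟩
  -- not eventually bare
  rintro ⟨M, hM⟩
  have key : ∀ L n b, M + 1 ≤ n → b ∈ C n → (P (f n) b).length ≤ L → False := by
    intro L
    induction L with
    | zero =>
      intro n b hn hb hlen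
      have hfnb : b ≠ f n := ((hInvn n).2.2.2 b hb).1
      exact hfnb (SimpleGraph.Walk.eq_of_length_eq_zero (Nat.le_zero.mp hlen)).symm
    | succ L IH =>
      intro n b hn hb hlen
      obtain ⟨m, rfl⟩ : ∃ m, n = m + 1 := ⟨n - 1, by omega⟩
      have hfnb : b ≠ f (m + 1) := ((hInvn (m + 1)).2.2.2 b hb).1
      have hfsp : fst (f (m + 1)) b ≠ pp (m + 1) := ((hInvn (m + 1)).2.2.2 b hb).2
      rw [hpn m] at hfsp
      -- degree 2 at f (m+1)
      have hdeg : eDeg S (f (m + 1)) = 2 := hM (m + 1) (by omega)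
      have hm1 : f m ∈ S.neighborSet (f (m + 1)) := (hadjf m).symm
      have hm2 : f (m + 2) ∈ S.neighborSet (f (m + 1)) := hadjf (m + 1)
      have hmne : f m ≠ f (m + 2) := by
        intro h; rw [hinj.eq_iff] at h; omega
      have hpair := pair_mem_eq hdeg hm1 hm2 hmne
      have hfs_mem : fst (f (m + 1)) b ∈ S.neighborSet (f (m + 1)) :=
        (master (f (m + 1)) b hfnb.symm).1
      have hfs : fst (f (m + 1)) b = f (m + 2) := by
        rcases hpair _ hfs_mem with h | h
        · exact absurd h hfsp
        · exact h
      by_cases hbeq : b = f (m + 2)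
      · -- b is on the ray; it has an extra neighbour outside A
        subst hbeq
        obtain ⟨c, hc1, hc2⟩ := hout _ ((hInvn (m + 1)).2.1 hb)
        have hdeg2 : eDeg S (f (m + 2)) = 2 := hM (m + 2) (by omega)
        have h1 : f (m + 1) ∈ S.neighborSet (f (m + 2)) := (hadjf (m + 1)).symm
        have h2 : f (m + 3) ∈ S.neighborSet (f (m + 2)) := hadjf (m + 2)
        have h3 : c ∈ S.neighborSet (f (m + 2)) := hc1
        have hne12 : f (m + 1) ≠ f (m + 3) := by
          intro h; rw [hinj.eq_iff] at h; omega
        have hne13 : f (m + 1) ≠ c := fun h => hc2 (h ▸ fA (m + 1))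
        have hne23 : f (m + 3) ≠ c := fun h => hc2 (h ▸ fA (m + 3))
        have h3le := three_le_encard h1 h2 h3 hne12 hne13 hne23
        unfold eDeg at hdeg2
        rw [hdeg2] at h3le
        norm_num at h3le
      · -- descend
        have hbC : b ∈ C (m + 2) := hmemf (m + 1) b hb (hfs ▸ hbeq) hfs
        have hlen' := (master (f (m + 1)) b hfnb.symm).2.1
        rw [hfs] at hlen'
        exact IH (m + 2) b (by omega) hbC (by omega)
  obtain ⟨b, hb⟩ := (hInvn (M + 1)).2.2.1.nonempty
  exact key (P (f (M + 1)) b).length (M + 1) b le_rfl hb le_rfl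


/-- If `μ` is a model of the tree `T` in the tree `S` and `v` has infinite
degree in `T`, then `μ v` contains a vertex of infinite degree of `S`, or `μ v` contains a
ray of `S` that is not eventually bare. -/
theorem stmt2 {V W : Type*} (T : SimpleGraph V) (S : SimpleGraph W)
    (hT : T.IsTree) (hS : S.IsTree) (μ : V → Set W) (hμ : IsModel T S μ)
    (v : V) (hv : eDeg T v = ⊤) :
    (∃ w ∈ μ v, eDeg S w = ⊤) ∨
      ∃ f : ℕ → W, IsRay S f ∧ ¬ EventuallyBare S f ∧ ∀ n, f n ∈ μ v := by
  classical
  by_cases hL : ∃ w ∈ μ v, eDeg S w = ⊤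
  · exact Or.inl hL
  right
  push_neg at hL
  have hNinf : (T.neighborSet v).Infinite := Set.encard_eq_top_iff.mp hv
  have hedge : ∀ w : V, T.Adj v w → ∃ a, a ∈ μ v ∧ ∃ b, b ∈ μ w ∧ S.Adj a b := by
    intro w h
    obtain ⟨a, ha, b, hb, hab⟩ := hμ.edge v w h
    exact ⟨a, ha, b, hb, hab⟩
  choose a ha b hb hab using hedge
  set B : Set W := {x | ∃ w, ∃ h : T.Adj v w, a w h = x} with hBdef
  have hBA : B ⊆ μ v := by
    rintro x ⟨w, h, rfl⟩
    exact ha w h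
  have hBinf : B.Infinite := by
    by_contra hBfin
    rw [Set.not_infinite] at hBfin
    have hNsub : T.neighborSet v ⊆ ⋃ x ∈ B, {w | ∃ h : T.Adj v w, a w h = x} := by
      intro w hw
      exact Set.mem_biUnion ⟨w, hw, rfl⟩ ⟨hw, rfl⟩
    have hfibfin : ∀ x ∈ B, {w | ∃ h : T.Adj v w, a w h = x}.Finite := by
      intro x hx
      by_contra hinf
      rw [← Set.not_infinite, not_not] at hinf
      obtain ⟨w0, hw0⟩ := hinf.nonempty
      obtain ⟨h0, hx0⟩ := hw0
      have hxμ : x ∈ μ v := hx0 ▸ ha w0 h0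
      -- the b's give infinitely many distinct neighbours of x
      set g : V → W := fun w => if h : T.Adj v w then b w h else x with hgdef
      have hinj : Set.InjOn g {w | ∃ h : T.Adj v w, a w h = x} := by
        rintro w1 ⟨h1, _⟩ w2 ⟨h2, _⟩ heq
        by_contra hne
        have hd := hμ.disjoint w1 w2 hne
        rw [hgdef] at heq
        simp only [dif_pos h1, dif_pos h2] at heq
        exact (Set.disjoint_left.mp hd (hb w1 h1)) (heq ▸ hb w2 h2)
      have himg : g '' {w | ∃ h : T.Adj v w, a w h = x} ⊆ S.neighborSet x := by
        rintro y ⟨w, ⟨h, hax⟩, rfl⟩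
        have : S.Adj (a w h) (b w h) := hab w h
        rw [hgdef]
        simp only [dif_pos h]
        exact (hax ▸ this : S.Adj x (b w h))
      have : (S.neighborSet x).Infinite := (hinf.image hinj).mono himg
      exact hL x hxμ (Set.encard_eq_top_iff.mpr this)
    exact hNinf ((hBfin.biUnion hfibfin).subset hNsub)
  have hout : ∀ x ∈ B, ∃ c, S.Adj x c ∧ c ∉ μ v := by
    rintro x ⟨w, h, rfl⟩
    refine ⟨b w h, hab w h, ?_⟩
    have hd := hμ.disjoint w v (fun heq => (T.irrefl (heq ▸ h)))
    exact fun hc => Set.disjoint_left.mp hd (hb w h) hc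
  obtain ⟨f, hray, hbare, hmem⟩ := tree_ray S hS (μ v) (hμ.connected v) B hBA hBinf hout hL
  exact ⟨f, hray, hbare, hmem⟩
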